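/- Fix constants b ≥ 1 and κ ∈ ℕ. Let {X_{k,i} : k ∈ {0, 1, …, b}, i ∈ ℕ} be a jointly independent family of identically distributed real-valued random variables with E = 0 and second moment 1. For d > κ let z_{k,s}^{(d)} = (X_{k,0}, …, X_{k,d−κ−1}) ∈ ℝ^{d−κ} be the truncation of z_k^{(d)} to its first d − κ coordinates, and define the truncated contrastive loss term L'_d = exp(S(z_{0,s}^{(d)}, z_{0,s}^{(d)})) / (exp(S(z_{0,s}^{(d)}, z_{0,s}^{(d)})) + Σ_{k=1}^{b} exp(S(z_{0,s}^{(d)}, z_{k,s}^{(d)}))), where S is cosine similarity with the zero-division convention. Then L'_d converges to e/(e + b) in probability as d → ∞. -/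

import Mathlib

open MeasureTheory ProbabilityTheory Filter Finset Topology

/-- Cosine similarity of two vectors in Euclidean space, with the convention
that division by zero yields `0` (which is the Lean convention for `/`). -/
noncomputable def cosSim {n : ℕ} (u v : EuclideanSpace ℝ (Fin n)) : ℝ :=
  (inner ℝ u v : ℝ) / (‖u‖ * ‖v‖)

/-- The random vector `(X 0, …, X (n-1)) ∈ ℝⁿ` built from a sequence of
real random variables; with `n = d - κ` this is the truncated representation
`z_s⁽ᵈ⁾ = (X 0, …, X (d-κ-1))`. -/
noncomputable def zvec {Ω : Type*} (X : ℕ → Ω → ℝ) (n : ℕ) (ω : Ω) :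
    EuclideanSpace ℝ (Fin n) :=
  (WithLp.equiv 2 (Fin n → ℝ)).symm fun i => X i ω

lemma aux_identDistrib_prod {Ω : Type*} {mΩ : MeasurableSpace Ω} {μ : Measure Ω}
    [IsProbabilityMeasure μ] {X Y X' Y' : Ω → ℝ}
    (hXY : IndepFun X Y μ) (hXY' : IndepFun X' Y' μ)
    (hX : IdentDistrib X X' μ μ) (hY : IdentDistrib Y Y' μ μ) :
    IdentDistrib (fun ω => (X ω, Y ω)) (fun ω => (X' ω, Y' ω)) μ μ := by
  refine ⟨hX.aemeasurable_fst.prodMk hY.aemeasurable_fst,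
    hX.aemeasurable_snd.prodMk hY.aemeasurable_snd, ?_⟩
  rw [(indepFun_iff_map_prod_eq_prod_map_map hX.aemeasurable_fst hY.aemeasurable_fst).1 hXY,
    (indepFun_iff_map_prod_eq_prod_map_map hX.aemeasurable_snd hY.aemeasurable_snd).1 hXY',
    hX.map_eq, hY.map_eq]

lemma zvec_norm {Ω : Type*} (X : ℕ → Ω → ℝ) (n : ℕ) (ω : Ω) :
    ‖zvec X n ω‖ = Real.sqrt (∑ i ∈ range n, (X i ω) ^ 2) := by
  rw [EuclideanSpace.norm_eq]
  congr 1
  rw [← Fin.sum_univ_eq_sum_range fun i => (X i ω) ^ 2]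
  refine Finset.sum_congr rfl fun i _ => ?_
  simp [zvec, sq_abs]

lemma zvec_inner {Ω : Type*} (X Y : ℕ → Ω → ℝ) (n : ℕ) (ω : Ω) :
    (inner ℝ (zvec X n ω) (zvec Y n ω) : ℝ) = ∑ i ∈ range n, X i ω * Y i ω := by
  rw [← Fin.sum_univ_eq_sum_range fun i => X i ω * Y i ω]
  rw [PiLp.inner_apply]
  refine Finset.sum_congr rfl fun i _ => ?_
  simp [zvec, RCLike.inner_apply, mul_comm]

lemma cosSim_zvec {Ω : Type*} (X Y : ℕ → Ω → ℝ) (n : ℕ) (ω : Ω) :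
    cosSim (zvec X n ω) (zvec Y n ω) =
      (∑ i ∈ range n, X i ω * Y i ω) /
        (Real.sqrt (∑ i ∈ range n, (X i ω) ^ 2) * Real.sqrt (∑ i ∈ range n, (Y i ω) ^ 2)) := by
  rw [cosSim, zvec_inner, zvec_norm, zvec_norm]

lemma aux_cross_tendsto {Ω : Type*} (X Y : ℕ → Ω → ℝ) (ω : Ω)
    (hA : Tendsto (fun n : ℕ => (∑ i ∈ range n, X i ω * Y i ω) / n) atTop (𝓝 0))
    (hQX : Tendsto (fun n : ℕ => (∑ i ∈ range n, (X i ω) ^ 2) / n) atTop (𝓝 1))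
    (hQY : Tendsto (fun n : ℕ => (∑ i ∈ range n, (Y i ω) ^ 2) / n) atTop (𝓝 1)) :
    Tendsto (fun n => cosSim (zvec X n ω) (zvec Y n ω)) atTop (𝓝 0) := by
  have h1 : Tendsto (fun n : ℕ => Real.sqrt
      (((∑ i ∈ range n, (X i ω) ^ 2) / n) * ((∑ i ∈ range n, (Y i ω) ^ 2) / n)))
      atTop (𝓝 1) := by
    have h := (Real.continuous_sqrt.tendsto (1 * 1)).comp (hQX.mul hQY)
    simpa [Function.comp_def] using h
  have key := hA.div h1 one_ne_zero
  rw [zero_div] at key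
  refine key.congr' ?_
  filter_upwards [eventually_gt_atTop 0] with n hn
  have hn' : (0 : ℝ) < n := by exact_mod_cast hn
  have hQXnn : (0:ℝ) ≤ ∑ i ∈ range n, (X i ω) ^ 2 := sum_nonneg fun i _ => sq_nonneg _
  rw [cosSim_zvec]
  simp only [Pi.div_apply]
  rw [show ((∑ i ∈ range n, (X i ω) ^ 2) / n) * ((∑ i ∈ range n, (Y i ω) ^ 2) / n)
      = ((∑ i ∈ range n, (X i ω) ^ 2) * (∑ i ∈ range n, (Y i ω) ^ 2)) / ((n:ℝ) * n) by ring,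
    Real.sqrt_div (by positivity), Real.sqrt_mul hQXnn, Real.sqrt_mul_self hn'.le]
  rcases eq_or_ne (Real.sqrt (∑ i ∈ range n, (X i ω) ^ 2)
      * Real.sqrt (∑ i ∈ range n, (Y i ω) ^ 2)) 0 with h | h
  · simp [h]
  · field_simp

lemma aux_self_eventually {Ω : Type*} (X : ℕ → Ω → ℝ) (ω : Ω)
    (hQX : Tendsto (fun n : ℕ => (∑ i ∈ range n, (X i ω) ^ 2) / n) atTop (𝓝 1)) :
    ∀ᶠ n : ℕ in atTop, cosSim (zvec X n ω) (zvec X n ω) = 1 := by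
  filter_upwards [hQX.eventually (eventually_gt_nhds zero_lt_one)] with n hn
  have hQpos : 0 < ∑ i ∈ range n, (X i ω) ^ 2 := by
    by_contra h'
    push_neg at h'
    have : (∑ i ∈ range n, (X i ω) ^ 2) / (n:ℝ) ≤ 0 :=
      div_nonpos_of_nonpos_of_nonneg h' (Nat.cast_nonneg n)
    linarith
  rw [cosSim_zvec, Real.mul_self_sqrt hQpos.le,
    show (∑ i ∈ range n, X i ω * X i ω) = ∑ i ∈ range n, (X i ω) ^ 2 by
      refine Finset.sum_congr rfl fun i _ => by ring,
    div_self hQpos.ne']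

/-- **Limit of the truncated contrastive loss term.**
Fix `b ≥ 1` and a truncation constant `κ`.  Let `{X k i : k ∈ {0,…,b}, i ∈ ℕ}`
be a jointly independent family of identically distributed real random
variables with mean `0` and second moment `1`, and let
`z_{k,s}⁽ᵈ⁾ = (X k 0, …, X k (d-κ-1)) ∈ ℝ^{d-κ}` be the truncation of
`z_k⁽ᵈ⁾` to its first `d - κ` coordinates.  Then the truncated contrastive
loss term
`L'_d = exp(S(z_{0,s},z_{0,s})) / (exp(S(z_{0,s},z_{0,s})) + ∑_{k=1}^b exp(S(z_{0,s},z_{k,s})))`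
converges to `e / (e + b)` in probability as `d → ∞`. -/
theorem truncated_contrastive_loss_tendsto_inProbability
    {Ω : Type*} {mΩ : MeasurableSpace Ω} (μ : Measure Ω) [IsProbabilityMeasure μ]
    (b : ℕ) (hb : 1 ≤ b) (κ : ℕ)
    (X : Fin (b + 1) → ℕ → Ω → ℝ)
    (hmeas : ∀ k i, Measurable (X k i))
    (hindep : iIndepFun (fun p : Fin (b + 1) × ℕ => X p.1 p.2) μ)
    (hident : ∀ k i, IdentDistrib (X k i) (X 0 0) μ μ)
    (hint : Integrable (fun ω => (X 0 0 ω) ^ 2) μ)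
    (hmean : ∫ ω, X 0 0 ω ∂μ = 0)
    (hsecond : ∫ ω, (X 0 0 ω) ^ 2 ∂μ = 1) :
    TendstoInMeasure μ
      (fun (d : ℕ) ω =>
        Real.exp (cosSim (zvec (X 0) (d - κ) ω) (zvec (X 0) (d - κ) ω)) /
          (Real.exp (cosSim (zvec (X 0) (d - κ) ω) (zvec (X 0) (d - κ) ω)) +
            ∑ k ∈ Finset.Ioi (0 : Fin (b + 1)),
              Real.exp (cosSim (zvec (X 0) (d - κ) ω) (zvec (X k) (d - κ) ω))))
      atTop (fun _ => Real.exp 1 / (Real.exp 1 + b)) := by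
  classical
  have hXint : Integrable (X 0 0) μ :=
    ((memLp_two_iff_integrable_sq (hmeas 0 0).aestronglyMeasurable).2 hint).integrable one_le_two
  have hmeas' : ∀ p : Fin (b + 1) × ℕ, Measurable fun ω => X p.1 p.2 ω := fun p => hmeas p.1 p.2
  -- strong law for the squares
  have hsq : ∀ k : Fin (b + 1), ∀ᵐ ω ∂μ,
      Tendsto (fun n : ℕ => (∑ i ∈ range n, (X k i ω) ^ 2) / n) atTop (𝓝 1) := by
    intro k
    set W : ℕ → Ω → ℝ := fun i ω => (X k i ω) ^ 2 with hW
    have hWindep : Pairwise (Function.onFun (IndepFun · · μ) W) := by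
      intro i j hij
      exact (hindep.indepFun
          (show ((k, i) : Fin (b + 1) × ℕ) ≠ (k, j) from fun h => hij (congrArg Prod.snd h))).comp
        (measurable_id.pow_const 2) (measurable_id.pow_const 2)
    have hWident : ∀ i, IdentDistrib (W i) (W 0) μ μ := fun i =>
      ((hident k i).trans (hident k 0).symm).comp (measurable_id.pow_const 2)
    have hWint : Integrable (W 0) μ :=
      ((hident k 0).comp (measurable_id.pow_const 2)).symm.integrable_snd hint
    have hWmean : μ[W 0] = 1 := by
      calc μ[W 0] = ∫ ω, (X 0 0 ω) ^ 2 ∂μ :=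
            ((hident k 0).comp (measurable_id.pow_const 2)).integral_eq
        _ = 1 := hsecond
    have h := strong_law_ae_real W hWint hWindep hWident
    rw [hWmean] at h
    exact h
  -- strong law for the cross terms
  have hcross : ∀ k : Fin (b + 1), k ≠ 0 → ∀ᵐ ω ∂μ,
      Tendsto (fun n : ℕ => (∑ i ∈ range n, X 0 i ω * X k i ω) / n) atTop (𝓝 0) := by
    intro k hk
    set Y : ℕ → Ω → ℝ := fun i ω => X 0 i ω * X k i ω with hY
    have hpind : ∀ i : ℕ, IndepFun (X 0 i) (X k i) μ := fun i =>
      hindep.indepFun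
        (show ((0 : Fin (b + 1)), i) ≠ (k, i) from fun h => hk (congrArg Prod.fst h).symm)
    have hYident : ∀ i, IdentDistrib (Y i) (Y 0) μ μ := fun i =>
      (aux_identDistrib_prod (hpind i) (hpind 0)
        ((hident 0 i).trans (hident 0 0).symm)
        ((hident k i).trans (hident k 0).symm)).comp (measurable_fst.mul measurable_snd)
    have hXk0 : Integrable (X k 0) μ := (hident k 0).symm.integrable_snd hXint
    have hYint : Integrable (Y 0) μ := (hpind 0).integrable_mul hXint hXk0
    have hYindep : Pairwise (Function.onFun (IndepFun · · μ) Y) := by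
      intro i j hij
      exact hindep.indepFun_mul_mul hmeas' (0, i) (k, i) (0, j) (k, j)
        (fun h => hij (congrArg Prod.snd h)) (fun h => hk (congrArg Prod.fst h).symm)
        (fun h => hk (congrArg Prod.fst h)) (fun h => hij (congrArg Prod.snd h))
    have hYmean : μ[Y 0] = 0 := by
      calc μ[Y 0] = (∫ ω, X 0 0 ω ∂μ) * ∫ ω, X k 0 ω ∂μ :=
            (hpind 0).integral_mul_eq_mul_integral hXint.aestronglyMeasurable hXk0.aestronglyMeasurable
        _ = 0 := by rw [hmean, zero_mul]
    have h := strong_law_ae_real Y hYint hYindep hYident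
    rw [hYmean] at h
    exact h
  have haeQ : ∀ᵐ ω ∂μ, ∀ k : Fin (b + 1),
      Tendsto (fun n : ℕ => (∑ i ∈ range n, (X k i ω) ^ 2) / n) atTop (𝓝 1) :=
    ae_all_iff.2 hsq
  have haeA : ∀ᵐ ω ∂μ, ∀ k : Fin (b + 1), k ≠ 0 →
      Tendsto (fun n : ℕ => (∑ i ∈ range n, X 0 i ω * X k i ω) / n) atTop (𝓝 0) := by
    rw [ae_all_iff]
    intro k
    by_cases hk : k = 0
    · exact ae_of_all _ fun ω h => absurd hk h
    · exact (hcross k hk).mono fun ω h _ => h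
  -- measurability
  have hcs : ∀ (k : Fin (b + 1)) (n : ℕ),
      Measurable fun ω => cosSim (zvec (X 0) n ω) (zvec (X k) n ω) := by
    intro k n
    simp only [cosSim_zvec]
    refine Measurable.div (Finset.measurable_sum _ fun i _ => (hmeas 0 i).mul (hmeas k i)) ?_
    exact (Real.continuous_sqrt.measurable.comp
        (Finset.measurable_sum _ fun i _ => (hmeas 0 i).pow_const 2)).mul
      (Real.continuous_sqrt.measurable.comp
        (Finset.measurable_sum _ fun i _ => (hmeas k i).pow_const 2))
  refine tendstoInMeasure_of_tendsto_ae (fun d => Measurable.aestronglyMeasurable ?_) ?_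
  · exact (Real.measurable_exp.comp (hcs 0 (d - κ))).div
      ((Real.measurable_exp.comp (hcs 0 (d - κ))).add
        (Finset.measurable_sum _ fun k _ => Real.measurable_exp.comp (hcs k (d - κ))))
  filter_upwards [haeQ, haeA] with ω hQ hA
  have hself := aux_self_eventually (X 0) ω (hQ 0)
  have hnumT : Tendsto (fun n : ℕ => Real.exp (cosSim (zvec (X 0) n ω) (zvec (X 0) n ω)))
      atTop (𝓝 (Real.exp 1)) := by
    refine Tendsto.congr' ?_ tendsto_const_nhds
    filter_upwards [hself] with n hn
    rw [hn]
  have hsumT : Tendsto (fun n : ℕ => ∑ k ∈ Finset.Ioi (0 : Fin (b + 1)),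
      Real.exp (cosSim (zvec (X 0) n ω) (zvec (X k) n ω))) atTop (𝓝 (b : ℝ)) := by
    have h := tendsto_finset_sum (Finset.Ioi (0 : Fin (b + 1))) (fun k hk =>
      (Real.continuous_exp.tendsto 0).comp
        (aux_cross_tendsto (X 0) (X k) ω (hA k (Finset.mem_Ioi.1 hk).ne') (hQ 0) (hQ k)))
    have hb' : (∑ _k ∈ Finset.Ioi (0 : Fin (b + 1)), Real.exp 0) = (b : ℝ) := by
      simp [Real.exp_zero, Fin.card_Ioi]
    rw [hb'] at h
    exact h
  have hne : Real.exp 1 + (b : ℝ) ≠ 0 := by positivity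
  have hfin := hnumT.div (hnumT.add hsumT) hne
  exact hfin.comp (tendsto_sub_atTop_nat κ)
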